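/- With notation as in the previous items, the ideal of Λ[y₁,...,yₙ] generated by the elements p_k(c|y) for k ≥ n equals the ideal generated by the elements p̃_k(h|y) for k ≥ n. -/

import Mathlib

/-- Substitution of a power series `g` with zero constant term into `F`. -/
noncomputable def substS {R : Type*} [CommRing R] (g F : PowerSeries R) : PowerSeries R :=
  PowerSeries.mk fun n =>
    ∑ k ∈ Finset.range (n + 1), PowerSeries.coeff k F * PowerSeries.coeff n (g ^ k)

/-- The ring `Λ[y₁,…,yₙ]`: `X (inl k)` is `c_k` (`k ≥ 1`), `X (inr i)` is `y_{i+1}`. -/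
abbrev Lam (n : ℕ) := MvPolynomial (ℕ ⊕ Fin n) ℤ

noncomputable def cL (n : ℕ) : ℕ → Lam n :=
  fun k => if k = 0 then 1 else MvPolynomial.X (.inl k)

noncomputable def yL (n : ℕ) : Fin n → Lam n := fun i => MvPolynomial.X (.inr i)

/-- `y₀ = yₙ`. -/
noncomputable def y0L (n : ℕ) : Lam n :=
  if h : 0 < n then yL n ⟨n - 1, Nat.sub_lt h one_pos⟩ else 0

/-- `C(t) = Σ c_k t^k`. -/
noncomputable def CL (n : ℕ) : PowerSeries (Lam n) := PowerSeries.mk (cL n)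

/-- `t/(1 - y₀t)`. -/
noncomputable def gL (n : ℕ) : PowerSeries (Lam n) :=
  PowerSeries.mk fun m => if m = 0 then 0 else y0L n ^ (m - 1)

/-- `H(t) = C(t/(1-y₀t))`. -/
noncomputable def HL (n : ℕ) : PowerSeries (Lam n) := substS (gL n) (CL n)

/-- `E(t) = Π_{i=1}^n (1 + y_i t)`. -/
noncomputable def EL (n : ℕ) : PowerSeries (Lam n) :=
  ∏ i : Fin n, (1 + PowerSeries.C (yL n i) * PowerSeries.X)

/-- `Ẽ(t) = Π_{i=1}^n (1 + (y_i - y₀) t)`. -/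
noncomputable def EtL (n : ℕ) : PowerSeries (Lam n) :=
  ∏ i : Fin n, (1 + PowerSeries.C (yL n i - y0L n) * PowerSeries.X)

namespace Stmt8Aux
open PowerSeries

variable {R : Type*} [CommRing R]

noncomputable def uu (y : R) : PowerSeries R := 1 - C y * X

noncomputable def UU (y : R) : PowerSeries R := mk fun m => y ^ m

noncomputable def gg (y : R) : PowerSeries R := mk fun m => if m = 0 then 0 else y ^ (m - 1)

lemma coeff_uu (y : R) (m : ℕ) :
    coeff m (uu y) = if m = 0 then 1 else if m = 1 then -y else 0 := by
  rcases m with _ | m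
  · simp [uu]
  · rcases m with _ | m
    · simp [uu]
    · simp [uu, coeff_C_mul, coeff_X, coeff_one]

lemma UU_eq (y : R) : UU y = 1 + C y * X * UU y := by
  ext m
  rcases m with _ | m
  · simp [UU]
  · rw [map_add, mul_assoc, coeff_one, coeff_C_mul, coeff_succ_X_mul]
    simp [UU, pow_succ']

lemma uu_mul_UU (y : R) : uu y * UU y = 1 := by
  have h := UU_eq y
  unfold uu
  linear_combination h

lemma gg_eq (y : R) : gg y = X * UU y := by
  ext m
  rcases m with _ | m
  · simp [gg, mul_comm, UU]
  · rw [coeff_succ_X_mul]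
    simp [gg, UU]

end Stmt8Aux

namespace Stmt8Aux
open PowerSeries

variable {R : Type*} [CommRing R]

lemma X_dvd_gg (y : R) : (X : R⟦X⟧) ∣ gg y := ⟨UU y, gg_eq y⟩

lemma coeff_gg_pow_mul {m k : ℕ} (y : R) (W : R⟦X⟧) (h : m < k) :
    coeff m ((gg y) ^ k * W) = 0 :=
  X_pow_dvd_iff.1 (dvd_mul_of_dvd_left (pow_dvd_pow_of_dvd (X_dvd_gg y) k) W) m h

lemma coeff_gg_pow_of_lt {m k : ℕ} (y : R) (h : m < k) :
    coeff m ((gg y) ^ k) = 0 := by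
  simpa using coeff_gg_pow_mul y 1 h

lemma coeff_substS_ext {m N : ℕ} (y : R) (F : R⟦X⟧) (h : m < N) :
    coeff m (substS (gg y) F) =
      ∑ k ∈ Finset.range N, coeff k F * coeff m ((gg y) ^ k) := by
  rw [substS, coeff_mk]
  apply Finset.sum_subset (Finset.range_subset_range.2 h)
  intro k hk hk2
  have hmk : m < k := by
    simp only [Finset.mem_range, not_lt] at hk2
    omega
  rw [coeff_gg_pow_of_lt y hmk, mul_zero]

lemma coeff_substS_aeval {m N : ℕ} (y : R) (F : R⟦X⟧) (h : m < N) :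
    coeff m (substS (gg y) F) =
      coeff m (Polynomial.aeval (gg y) (trunc N F)) := by
  obtain ⟨N, rfl⟩ : ∃ N', N = N' + 1 := ⟨N - 1, by omega⟩
  rw [Polynomial.aeval_eq_sum_range' (natDegree_trunc_lt F N) (gg y),
    coeff_substS_ext y F h, map_sum]
  refine Finset.sum_congr rfl fun k hk => ?_
  rw [coeff_smul, coeff_trunc, if_pos (Finset.mem_range.1 hk), smul_eq_mul]

lemma substS_mul (y : R) (F G : R⟦X⟧) :
    substS (gg y) (F * G) = substS (gg y) F * substS (gg y) G := by
  ext m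
  have hm : m < m + 1 := Nat.lt_succ_self m
  set N := m + 1 with hN
  have hdvd : (Polynomial.X : Polynomial R) ^ N ∣ (trunc N F * trunc N G - trunc N (F * G)) := by
    rw [Polynomial.X_pow_dvd_iff]
    intro d hd
    rw [Polynomial.coeff_sub, coeff_trunc, if_pos hd, ← Polynomial.coeff_coe, Polynomial.coe_mul,
      ← coeff_mul_eq_coeff_trunc_mul_trunc F G hd, sub_self]
  obtain ⟨D, hD⟩ := hdvd
  have key : coeff m (Polynomial.aeval (gg y) (trunc N F * trunc N G))
      = coeff m (Polynomial.aeval (gg y) (trunc N (F * G))) := by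
    have : (Polynomial.aeval (gg y)) (trunc N F * trunc N G)
        - (Polynomial.aeval (gg y)) (trunc N (F * G))
        = (gg y) ^ N * Polynomial.aeval (gg y) D := by
      rw [← map_sub, hD, map_mul, map_pow, Polynomial.aeval_X]
    have h0 : coeff m ((gg y) ^ N * Polynomial.aeval (gg y) D) = 0 :=
      coeff_gg_pow_mul y _ hm
    have := congrArg (coeff m) this
    rw [map_sub, h0, sub_eq_zero] at this
    exact this
  rw [coeff_substS_aeval y (F * G) hm, ← key, map_mul, coeff_mul, coeff_mul]
  refine Finset.sum_congr rfl fun p hp => ?_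
  replace hp := Finset.HasAntidiagonal.mem_antidiagonal.1 hp
  rw [coeff_substS_aeval y F (show p.1 < N by omega),
    coeff_substS_aeval y G (show p.2 < N by omega)]

end Stmt8Aux

namespace Stmt8Aux
open PowerSeries

variable {R : Type*} [CommRing R]

lemma substS_add (g F G : PowerSeries R) :
    substS g (F + G) = substS g F + substS g G := by
  ext m
  simp [substS, add_mul, Finset.sum_add_distrib]

lemma substS_C (g : PowerSeries R) (a : R) : substS g (C a) = C a := by
  ext m
  rw [substS, coeff_mk, Finset.sum_eq_single 0]
  · simp [coeff_zero_eq_constantCoeff, coeff_C]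
  · intro k hk hk0
    simp [coeff_C, hk0]
  · simp

lemma substS_one (g : PowerSeries R) : substS g 1 = 1 := by
  simpa using substS_C g 1

lemma substS_X (y : R) : substS (gg y) X = gg y := by
  ext m
  rw [coeff_substS_ext y X (show m < m + 2 by omega), Finset.sum_eq_single 1]
  · simp
  · intro k hk hk1
    simp [coeff_X, hk1]
  · simp

/-- `substS (gg y)` as a ring homomorphism. -/
noncomputable def substRH (y : R) : PowerSeries R →+* PowerSeries R where
  toFun := substS (gg y)
  map_one' := substS_one _
  map_mul' := substS_mul y
  map_zero' := by simpa using substS_C (gg y) 0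
  map_add' := substS_add _

lemma substRH_apply (y : R) (F : R⟦X⟧) : substRH y F = substS (gg y) F := rfl

end Stmt8Aux

namespace Stmt8Aux
open PowerSeries

variable {R : Type*} [CommRing R]

lemma substRH_uu (y : R) : substRH (-y) (uu y) = UU (-y) := by
  have : substRH (-y) (uu y) = 1 - C y * gg (-y) := by
    rw [uu, map_sub, map_one, map_mul, substRH_apply, substRH_apply, substS_C, substS_X]
  rw [this]
  ext m
  rcases m with _ | m
  · simp [UU, gg]
  · rw [map_sub, coeff_one, coeff_C_mul]
    simp only [UU, gg, coeff_mk, Nat.succ_ne_zero, if_false, coeff_mk]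
    rw [pow_succ']
    ring_nf
    simp

lemma substRH_UU (y : R) : substRH (-y) (UU y) = uu (-y) := by
  have h1 : substRH (-y) (uu y) * substRH (-y) (UU y) = 1 := by
    rw [← map_mul, uu_mul_UU, map_one]
  calc substRH (-y) (UU y) = (uu (-y) * UU (-y)) * substRH (-y) (UU y) := by
        rw [uu_mul_UU, one_mul]
    _ = uu (-y) * (substRH (-y) (uu y) * substRH (-y) (UU y)) := by
        rw [substRH_uu]; ring
    _ = uu (-y) := by rw [h1, mul_one]

lemma substRH_gg (y : R) : substRH (-y) (gg y) = X := by
  rw [gg_eq y, map_mul, substRH_UU, substRH_apply, substS_X, gg_eq (-y)]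
  calc X * UU (-y) * uu (-y) = X * (uu (-y) * UU (-y)) := by ring
    _ = X := by rw [uu_mul_UU, mul_one]

lemma substS_substS (y : R) (F : R⟦X⟧) :
    substS (gg (-y)) (substS (gg y) F) = F := by
  ext m
  rw [coeff_substS_ext (-y) _ (Nat.lt_succ_self m)]
  have step1 : ∀ k ∈ Finset.range (m + 1),
      coeff k (substS (gg y) F) * coeff m ((gg (-y)) ^ k)
      = ∑ l ∈ Finset.range (m + 1),
          coeff l F * (coeff k ((gg y) ^ l) * coeff m ((gg (-y)) ^ k)) := by
    intro k hk
    rw [coeff_substS_ext y F (Finset.mem_range.1 hk), Finset.sum_mul]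
    exact Finset.sum_congr rfl fun l _ => mul_assoc _ _ _
  rw [Finset.sum_congr rfl step1, Finset.sum_comm]
  have step2 : ∀ l ∈ Finset.range (m + 1),
      (∑ k ∈ Finset.range (m + 1),
        coeff l F * (coeff k ((gg y) ^ l) * coeff m ((gg (-y)) ^ k)))
      = coeff l F * coeff m ((X : R⟦X⟧) ^ l) := by
    intro l hl
    rw [← Finset.mul_sum, ← coeff_substS_ext (-y) ((gg y) ^ l) (Nat.lt_succ_self m)]
    congr 2
    rw [← substRH_apply, map_pow, substRH_gg]
  rw [Finset.sum_congr rfl step2, Finset.sum_eq_single m]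
  · simp [coeff_X_pow]
  · intro l hl hlm
    rw [coeff_X_pow, if_neg (by omega), mul_zero]
  · intro h
    exact absurd (Finset.self_mem_range_succ m) h

end Stmt8Aux

namespace Stmt8Aux
open PowerSeries

variable {R : Type*} [CommRing R]

lemma derivativeFun_C' (r : R) : (C r : R⟦X⟧).derivativeFun = 0 := derivative_C

lemma coeff_derivativeFun' (f : R⟦X⟧) (n : ℕ) :
    coeff n f.derivativeFun = coeff (n + 1) f * (n + 1) := coeff_derivative f n

lemma uu_mul_gg (y : R) : uu y * gg y = X := by
  rw [gg_eq]
  calc uu y * (X * UU y) = X * (uu y * UU y) := by ring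
    _ = X := by rw [uu_mul_UU, mul_one]

lemma derivativeFun_X' : (X : R⟦X⟧).derivativeFun = 1 := derivative_X

lemma uu_sq_mul_derivativeFun_gg (y : R) :
    uu y ^ 2 * (gg y).derivativeFun = 1 := by
  have h := congrArg derivativeFun (uu_mul_gg y)
  rw [derivativeFun_mul, derivativeFun_X'] at h
  have hu : (uu y).derivativeFun = - C y := by
    rw [uu, ← sub_eq_zero]
    have : (1 - C y * X : R⟦X⟧).derivativeFun
        = (1 : R⟦X⟧).derivativeFun + (-(C y * X)).derivativeFun := by
      rw [← derivativeFun_add]; ring_nf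
    rw [this, derivativeFun_one]
    have : (-(C y * X) : R⟦X⟧) = C (-y) * X := by rw [map_neg]; ring
    rw [this]
    have : (C (-y) * X : R⟦X⟧).derivativeFun
        = C (-y) • (X : R⟦X⟧).derivativeFun + X • (C (-y)).derivativeFun :=
      derivativeFun_mul (C (-y)) X
    rw [this, derivativeFun_C', derivativeFun_X']
    simp
  rw [hu] at h
  -- h : uu y • (gg y).derivativeFun + gg y • (-C y) = 1
  have h2 : uu y * (gg y).derivativeFun = 1 + C y * gg y := by
    rw [smul_eq_mul, smul_eq_mul] at h
    linear_combination h
  calc uu y ^ 2 * (gg y).derivativeFun = uu y * (uu y * (gg y).derivativeFun) := by ring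
    _ = uu y * (1 + C y * gg y) := by rw [h2]
    _ = uu y + C y * (uu y * gg y) := by ring
    _ = uu y + C y * X := by rw [uu_mul_gg]
    _ = 1 := by rw [uu]; ring

lemma uu_sq_mul_derivativeFun_gg_pow (y : R) (k : ℕ) :
    uu y ^ 2 * ((gg y) ^ k).derivativeFun = (k : R⟦X⟧) * (gg y) ^ (k - 1) := by
  induction k with
  | zero => simp [derivativeFun_one]
  | succ k ih =>
    rw [pow_succ (gg y) k, derivativeFun_mul, smul_eq_mul, smul_eq_mul, mul_add]
    have h1 : uu y ^ 2 * ((gg y) ^ k * (gg y).derivativeFun)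
        = (gg y) ^ k := by
      calc uu y ^ 2 * ((gg y) ^ k * (gg y).derivativeFun)
          = (gg y) ^ k * (uu y ^ 2 * (gg y).derivativeFun) := by ring
        _ = (gg y) ^ k := by rw [uu_sq_mul_derivativeFun_gg, mul_one]
    have h2 : uu y ^ 2 * ((gg y) * ((gg y) ^ k).derivativeFun)
        = (k : R⟦X⟧) * (gg y) ^ k := by
      rcases Nat.eq_zero_or_pos k with hk | hk
      · subst hk; simp [derivativeFun_one]
      · calc uu y ^ 2 * ((gg y) * ((gg y) ^ k).derivativeFun)
            = (gg y) * (uu y ^ 2 * ((gg y) ^ k).derivativeFun) := by ring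
          _ = (gg y) * ((k : R⟦X⟧) * (gg y) ^ (k - 1)) := by rw [ih]
          _ = (k : R⟦X⟧) * ((gg y) * (gg y) ^ (k - 1)) := by ring
          _ = (k : R⟦X⟧) * (gg y) ^ k := by
              have hkk : k - 1 + 1 = k := by omega
              rw [← pow_succ', hkk]
    rw [h1, h2, Nat.add_sub_cancel]
    push_cast
    ring

end Stmt8Aux

namespace Stmt8Aux
open PowerSeries

variable {R : Type*} [CommRing R]

lemma derivativeFun_zero' : (0 : R⟦X⟧).derivativeFun = 0 := by
  simpa using derivativeFun_C' (0 : R)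

lemma derivativeFun_C_mul (a : R) (f : R⟦X⟧) :
    (C a * f).derivativeFun = C a * f.derivativeFun := by
  rw [derivativeFun_mul, derivativeFun_C']
  simp [smul_eq_mul]

lemma derivativeFun_sum {ι : Type*} (s : Finset ι) (f : ι → R⟦X⟧) :
    (∑ i ∈ s, f i).derivativeFun = ∑ i ∈ s, (f i).derivativeFun := by
  classical
  induction s using Finset.induction_on with
  | empty => simpa using derivativeFun_zero'
  | insert a s h ih =>
    rw [Finset.sum_insert h, Finset.sum_insert h, derivativeFun_add, ih]

lemma derivativeFun_X_pow (k : ℕ) :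
    ((X : R⟦X⟧) ^ k).derivativeFun = C (k : R) * X ^ (k - 1) := by
  ext j
  rw [coeff_derivativeFun', coeff_X_pow, coeff_C_mul, coeff_X_pow]
  rcases k with _ | k
  · simp
  · by_cases hj : j = k
    · subst hj
      rw [if_pos rfl, if_pos (by omega)]
      push_cast
      ring
    · rw [if_neg (by omega), if_neg (by omega)]
      simp

lemma substS_C_mul_X_pow (y : R) (a : R) (k : ℕ) :
    substS (gg y) (C a * X ^ k) = C a * (gg y) ^ k := by
  rw [← substRH_apply, map_mul, map_pow]
  rw [substRH_apply, substRH_apply, substS_C, substS_X]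

lemma chain (y : R) (F : R⟦X⟧) :
    uu y ^ 2 * (substS (gg y) F).derivativeFun = substS (gg y) F.derivativeFun := by
  ext m
  set N := m + 2 with hN
  set Pn : R⟦X⟧ := ∑ k ∈ Finset.range N, C (coeff k F) * X ^ k with hPn
  have hdvd : (X : R⟦X⟧) ^ N ∣ F - Pn := by
    rw [X_pow_dvd_iff]
    intro j hj
    rw [map_sub, hPn, map_sum, Finset.sum_eq_single j, coeff_C_mul, coeff_X_pow,
      if_pos rfl, mul_one, sub_self]
    · intro k hk hkj
      rw [coeff_C_mul, coeff_X_pow, if_neg (fun h => hkj h.symm), mul_zero]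
    · intro h
      exact absurd (Finset.mem_range.2 hj) h
  obtain ⟨Rf, hRf⟩ := hdvd
  have hF : F = Pn + X ^ N * Rf := by rw [← hRf]; ring
  have hpoly : uu y ^ 2 * (substS (gg y) Pn).derivativeFun
      = substS (gg y) Pn.derivativeFun := by
    rw [hPn]
    simp only [← substRH_apply]
    rw [map_sum, derivativeFun_sum, derivativeFun_sum, map_sum, Finset.mul_sum]
    refine Finset.sum_congr rfl fun k _ => ?_
    rw [substRH_apply, substS_C_mul_X_pow, derivativeFun_C_mul, derivativeFun_C_mul,
      derivativeFun_X_pow, ← mul_assoc, mul_comm (uu y ^ 2) (C (coeff k F)),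
      mul_assoc, uu_sq_mul_derivativeFun_gg_pow, ← map_natCast C k, map_mul,
      substRH_apply, substS_C, substRH_apply, substS_C_mul_X_pow]
  have hrem1 : coeff m (uu y ^ 2 * (substS (gg y) (X ^ N * Rf)).derivativeFun) = 0 := by
    have hZ : substS (gg y) (X ^ N * Rf) = (gg y) ^ N * substS (gg y) Rf := by
      rw [← substRH_apply, map_mul, map_pow, substRH_apply, substRH_apply, substS_X]
    have hZc : ∀ j, j < N → coeff j (substS (gg y) (X ^ N * Rf)) = 0 := by
      intro j hj
      rw [hZ]
      exact coeff_gg_pow_mul y _ hj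
    have hZd : ∀ j, j ≤ m → coeff j (substS (gg y) (X ^ N * Rf)).derivativeFun = 0 := by
      intro j hj
      rw [coeff_derivativeFun', hZc (j + 1) (by omega), zero_mul]
    rw [coeff_mul]
    apply Finset.sum_eq_zero
    intro p hp
    replace hp := Finset.HasAntidiagonal.mem_antidiagonal.1 hp
    rw [hZd p.2 (by omega), mul_zero]
  have hrem2 : coeff m (substS (gg y) (X ^ N * Rf).derivativeFun) = 0 := by
    have hWc : ∀ j, j < m + 1 → coeff j (X ^ N * Rf).derivativeFun = 0 := by
      intro j hj
      rw [coeff_derivativeFun',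
        X_pow_dvd_iff.1 (dvd_mul_right ((X : R⟦X⟧) ^ N) Rf) (j + 1) (by omega), zero_mul]
    obtain ⟨W2, hW2⟩ := X_pow_dvd_iff.2 hWc
    rw [hW2, ← substRH_apply, map_mul, map_pow, substRH_apply, substRH_apply, substS_X]
    exact coeff_gg_pow_mul y _ (Nat.lt_succ_self m)
  calc coeff m (uu y ^ 2 * (substS (gg y) F).derivativeFun)
      = coeff m (uu y ^ 2 * (substS (gg y) Pn).derivativeFun)
        + coeff m (uu y ^ 2 * (substS (gg y) (X ^ N * Rf)).derivativeFun) := by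
        rw [← map_add, ← mul_add, ← derivativeFun_add, ← substS_add, ← hF]
    _ = coeff m (substS (gg y) Pn.derivativeFun)
        + coeff m (substS (gg y) (X ^ N * Rf).derivativeFun) := by
        rw [hpoly, hrem1, hrem2]
    _ = coeff m (substS (gg y) F.derivativeFun) := by
        rw [← map_add, ← substS_add, ← derivativeFun_add, ← hF]

end Stmt8Aux

namespace Stmt8Aux
open PowerSeries

variable {R : Type*} [CommRing R]

lemma coeff_uu_pow_of_lt {i j : ℕ} (y : R) (h : j < i) : coeff i ((uu y) ^ j) = 0 := by
  induction j generalizing i with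
  | zero =>
    rw [pow_zero, coeff_one, if_neg (by omega)]
  | succ j ih =>
    rw [pow_succ, coeff_mul]
    apply Finset.sum_eq_zero
    intro p hp
    replace hp := Finset.HasAntidiagonal.mem_antidiagonal.1 hp
    by_cases ha : j < p.1
    · rw [ih ha, zero_mul]
    · have : 2 ≤ p.2 := by omega
      rw [coeff_uu (y := y) (m := p.2), if_neg (by omega), if_neg (by omega), mul_zero]

lemma mem_span_aux (n : ℕ) (y : R) (q : ℕ → R) (I : Ideal R)
    (hq : ∀ k, n ≤ k → q k ∈ I) (m : ℕ) (hm : n ≤ m + 1) :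
    coeff m (UU y ^ 2 * uu y ^ n * substS (gg y) (mk fun j => q (j + 1))) ∈ I := by
  set W : R⟦X⟧ := UU y ^ 2 * uu y ^ n with hW
  set Q : R⟦X⟧ := mk fun j => q (j + 1) with hQ
  set P : R⟦X⟧ := ∑ k ∈ Finset.range (m + 1), C (q (k + 1)) * (gg y) ^ k with hP
  have hdvd : (X : R⟦X⟧) ^ (m + 1) ∣ substS (gg y) Q - P := by
    rw [X_pow_dvd_iff]
    intro j hj
    rw [map_sub, coeff_substS_ext y Q hj, hP, map_sum, sub_eq_zero]
    refine Finset.sum_congr rfl fun k _ => ?_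
    rw [coeff_C_mul, hQ, coeff_mk]
  obtain ⟨D, hD⟩ := hdvd
  have hsplit : coeff m (W * substS (gg y) Q) = coeff m (W * P) := by
    have he : W * substS (gg y) Q = W * P + X ^ (m + 1) * (W * D) := by
      have : substS (gg y) Q = P + X ^ (m + 1) * D := by rw [← hD]; ring
      rw [this]; ring
    rw [he, map_add, X_pow_dvd_iff.1 ⟨W * D, rfl⟩ m (Nat.lt_succ_self m), add_zero]
  rw [hsplit, hP, Finset.mul_sum, map_sum]
  apply Ideal.sum_mem
  intro k hk
  have hkm := Finset.mem_range.1 hk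
  have he2 : W * (C (q (k + 1)) * (gg y) ^ k) = C (q (k + 1)) * (W * (gg y) ^ k) := by
    ring
  rw [he2, coeff_C_mul]
  by_cases hkn : n ≤ k + 1
  · exact I.mul_mem_right _ (hq (k + 1) hkn)
  · have hk2 : k + 2 ≤ n := by omega
    have h0 : coeff m (W * (gg y) ^ k) = 0 := by
      have e : uu y ^ n = uu y ^ (k + 2) * uu y ^ (n - (k + 2)) := by
        rw [← pow_add]
        congr 1
        omega
      have e2 : UU y ^ 2 * UU y ^ k * uu y ^ (k + 2) = 1 := by
        rw [show UU y ^ 2 * UU y ^ k = UU y ^ (k + 2) from by rw [← pow_add]; ring_nf,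
          ← mul_pow, mul_comm (UU y) (uu y), uu_mul_UU, one_pow]
      have e3 : W * (gg y) ^ k = X ^ k * uu y ^ (n - (k + 2)) := by
        rw [hW, gg_eq, mul_pow, e]
        calc UU y ^ 2 * (uu y ^ (k + 2) * uu y ^ (n - (k + 2))) * (X ^ k * UU y ^ k)
            = X ^ k * (UU y ^ 2 * UU y ^ k * uu y ^ (k + 2)) * uu y ^ (n - (k + 2)) := by
              ring
          _ = X ^ k * uu y ^ (n - (k + 2)) := by rw [e2]; ring
      rw [e3, coeff_X_pow_mul', if_pos (by omega)]
      exact coeff_uu_pow_of_lt y (by omega)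
    rw [h0, mul_zero]
    exact I.zero_mem

end Stmt8Aux


/-- The ideal of `Λ[y₁,…,yₙ]` generated by the `p_k(c|y)`, `k ≥ n`, equals the ideal
generated by the `p̃_k(h|y)`, `k ≥ n`. -/
theorem stmt8 (n : ℕ) (hn : 0 < n) (p pt pcy phy : ℕ → Lam n)
    (hp : (PowerSeries.mk fun j => p (j + 1)) * CL n = (CL n).derivativeFun)
    (hpt : (PowerSeries.mk fun j => pt (j + 1)) * HL n = (HL n).derivativeFun)
    (hpcy : (PowerSeries.mk fun j => pcy (j + 1)) =
      (PowerSeries.mk fun j => p (j + 1)) * EL n)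
    (hphy : (PowerSeries.mk fun j => phy (j + 1)) =
      (PowerSeries.mk fun j => pt (j + 1)) * EtL n) :
    Ideal.span {x : Lam n | ∃ k, n ≤ k ∧ x = pcy k} =
      Ideal.span {x : Lam n | ∃ k, n ≤ k ∧ x = phy k} := by
  open Stmt8Aux PowerSeries in
  classical
  set y0 : Lam n := y0L n with hy0
  have hg : gL n = gg y0 := rfl
  have hH : HL n = substS (gg y0) (CL n) := rfl
  set A : PowerSeries (Lam n) := PowerSeries.mk fun j => p (j + 1) with hA
  set At : PowerSeries (Lam n) := PowerSeries.mk fun j => pt (j + 1) with hAt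
  set Pcy : PowerSeries (Lam n) := PowerSeries.mk fun j => pcy (j + 1) with hPcy
  set Phy : PowerSeries (Lam n) := PowerSeries.mk fun j => phy (j + 1) with hPhy
  -- `H` is a unit
  have hHc : constantCoeff (HL n) = 1 := by
    rw [← coeff_zero_eq_constantCoeff_apply, HL, substS, coeff_mk, Finset.sum_range_one]
    simp [CL, cL]
  have hHu : IsUnit (HL n) := isUnit_iff_constantCoeff.2 (by rw [hHc]; exact isUnit_one)
  -- chain rule consequence
  have h1 : uu y0 ^ 2 * (HL n).derivativeFun = substS (gg y0) A * HL n := by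
    rw [hH, chain y0 (CL n), ← hp, ← substRH_apply, map_mul, substRH_apply, substRH_apply,
      ← hH]
  have huAt : uu y0 ^ 2 * At = substS (gg y0) A := by
    apply hHu.mul_left_cancel
    calc HL n * (uu y0 ^ 2 * At) = uu y0 ^ 2 * (At * HL n) := by ring
      _ = uu y0 ^ 2 * (HL n).derivativeFun := by rw [hpt]
      _ = substS (gg y0) A * HL n := h1
      _ = HL n * substS (gg y0) A := by ring
  -- Ẽ = uⁿ ⬝ (E ∘ g)
  have hfac : ∀ i : Fin n, (1 : PowerSeries (Lam n)) + C (yL n i - y0) * X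
      = uu y0 * substRH y0 (1 + C (yL n i) * X) := by
    intro i
    rw [map_add, map_one, map_mul, substRH_apply, substRH_apply, substS_C, substS_X]
    have h' : uu y0 * (1 + C (yL n i) * gg y0)
        = uu y0 + C (yL n i) * (uu y0 * gg y0) := by ring
    rw [h', uu_mul_gg, uu, map_sub]
    ring
  have hEt : EtL n = uu y0 ^ n * substS (gg y0) (EL n) := by
    rw [EtL, Finset.prod_congr rfl fun i _ => hfac i, Finset.prod_mul_distrib,
      Finset.prod_const, ← map_prod, Finset.card_univ, Fintype.card_fin, ← EL,
      substRH_apply]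
  -- the key relations
  have hone : uu y0 * UU y0 = 1 := uu_mul_UU y0
  have key1 : Phy = UU y0 ^ 2 * uu y0 ^ n * substS (gg y0) Pcy := by
    have hSP : substS (gg y0) Pcy = substS (gg y0) A * substS (gg y0) (EL n) := by
      rw [hpcy, ← substRH_apply, map_mul, substRH_apply, substRH_apply]
    rw [hSP, ← huAt]
    rw [hphy, hEt]
    calc At * (uu y0 ^ n * substS (gg y0) (EL n))
        = (uu y0 * UU y0) ^ 2 * (At * (uu y0 ^ n * substS (gg y0) (EL n))) := by
          rw [hone, one_pow, one_mul]
      _ = UU y0 ^ 2 * uu y0 ^ n * (uu y0 ^ 2 * At * substS (gg y0) (EL n)) := by ring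
  have key2 : Pcy = UU (-y0) ^ 2 * uu (-y0) ^ n * substS (gg (-y0)) Phy := by
    have hSPcy : uu y0 ^ 2 * UU y0 ^ n * Phy = substS (gg y0) Pcy := by
      rw [key1]
      calc uu y0 ^ 2 * UU y0 ^ n * (UU y0 ^ 2 * uu y0 ^ n * substS (gg y0) Pcy)
          = (uu y0 * UU y0) ^ (2 + n) * substS (gg y0) Pcy := by
            rw [mul_pow, pow_add, pow_add]; ring
        _ = substS (gg y0) Pcy := by rw [hone, one_pow, one_mul]
    have := substS_substS y0 Pcy
    rw [← hSPcy] at this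
    rw [← this, ← substRH_apply, map_mul, map_mul, map_pow, map_pow, substRH_uu,
      substRH_UU, substRH_apply]
  -- conclude
  apply le_antisymm
  · rw [Ideal.span_le]
    rintro x ⟨k, hk, rfl⟩
    have hk1 : 1 ≤ k := le_trans hn hk
    have hcoeff : pcy k = coeff (k - 1) Pcy := by
      rw [hPcy, coeff_mk]
      congr 1
      omega
    rw [hcoeff, key2]
    exact mem_span_aux n (-y0) phy (Ideal.span {x : Lam n | ∃ k, n ≤ k ∧ x = phy k})
      (fun j hj => Ideal.subset_span ⟨j, hj, rfl⟩) (k - 1) (by omega)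
  · rw [Ideal.span_le]
    rintro x ⟨k, hk, rfl⟩
    have hk1 : 1 ≤ k := le_trans hn hk
    have hcoeff : phy k = coeff (k - 1) Phy := by
      rw [hPhy, coeff_mk]
      congr 1
      omega
    rw [hcoeff, key1]
    exact mem_span_aux n y0 pcy (Ideal.span {x : Lam n | ∃ k, n ≤ k ∧ x = pcy k})
      (fun j hj => Ideal.subset_span ⟨j, hj, rfl⟩) (k - 1) (by omega)
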